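/- Let (a_m)_{m≥1}, (b_m)_{m≥2} be complex sequences with |a_m| ≤ (m+1)(2m+1)/6 for m ≥ 1 and |b_m| ≤ (m-1)(2m-1)/6 for m ≥ 2. Then ∑_{m=1}^∞ |a_m| r^m + ∑_{m=2}^∞ |b_m| r^m ≤ ∑_{m=1}^∞ ((2m^2+1)/3) r^m = 2r(1+r)/(3(1-r)^3) + r/(3(1-r)) for r ∈ (0,1), and this sum is ≤ 1 whenever 4r^3 - 9r^2 + 12r - 3 ≤ 0. -/

import Mathlib

/-- Bohr-type estimate under the Sheil-Small coefficient bounds for harmonic maps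
convex in one direction. -/
theorem bohr_sum_bound_sheilSmall (a b : ℕ → ℂ)
    (ha : ∀ m : ℕ, 1 ≤ m → ‖a m‖ ≤ ((m : ℝ) + 1) * (2 * m + 1) / 6)
    (hb : ∀ m : ℕ, 2 ≤ m → ‖b m‖ ≤ ((m : ℝ) - 1) * (2 * m - 1) / 6) :
    ∀ r : ℝ, r ∈ Set.Ioo (0 : ℝ) 1 →
      (∑' m : ℕ, ‖a (m + 1)‖ * r ^ (m + 1) + ∑' m : ℕ, ‖b (m + 2)‖ * r ^ (m + 2) ≤
          ∑' m : ℕ, ((2 * ((m : ℝ) + 1) ^ 2 + 1) / 3) * r ^ (m + 1)) ∧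
      (∑' m : ℕ, ((2 * ((m : ℝ) + 1) ^ 2 + 1) / 3) * r ^ (m + 1) =
          2 * r * (1 + r) / (3 * (1 - r) ^ 3) + r / (3 * (1 - r)) ) ∧
      (4 * r ^ 3 - 9 * r ^ 2 + 12 * r - 3 ≤ 0 →
        ∑' m : ℕ, ‖a (m + 1)‖ * r ^ (m + 1) + ∑' m : ℕ, ‖b (m + 2)‖ * r ^ (m + 2) ≤ 1) := by
  intro r hr
  obtain ⟨hr0, hr1⟩ := hr
  have hrn : ‖r‖ < 1 := by rw [Real.norm_eq_abs, abs_of_pos hr0]; exact hr1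
  have h1r : (0:ℝ) < 1 - r := by linarith
  have hrpow : ∀ n : ℕ, (0:ℝ) < r ^ n := fun n => pow_pos hr0 n
  -- HasSum for the majorant series
  have hc2 : HasSum (fun n : ℕ => ((n + 2).choose 2 : ℝ) * r ^ n) (1 / (1 - r) ^ 3) :=
    hasSum_choose_mul_geometric_of_norm_lt_one 2 hrn
  have hc1 : HasSum (fun n : ℕ => ((n + 1).choose 1 : ℝ) * r ^ n) (1 / (1 - r) ^ 2) :=
    hasSum_choose_mul_geometric_of_norm_lt_one 1 hrn
  have hc0 : HasSum (fun n : ℕ => r ^ n) (1 / (1 - r)) := by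
    simpa using hasSum_geometric_of_norm_lt_one hrn
  set g : ℕ → ℝ := fun m => ((2 * ((m : ℝ) + 1) ^ 2 + 1) / 3) * r ^ (m + 1) with hgdef
  have hgsum : HasSum g (r * ((4/3) * (1 / (1 - r) ^ 3) + ((-2/3) * (1 / (1 - r) ^ 2)
      + (1/3) * (1 / (1 - r))))) := by
    have h := ((hc2.mul_left (4/3)).add ((hc1.mul_left (-2/3)).add
      (hc0.mul_left (1/3)))).mul_left r
    convert h using 1
    case e'_3 => rfl
    funext m
    have e2 : ((m + 2).choose 2 : ℝ) = ((m:ℝ) + 2) * ((m:ℝ) + 1) / 2 := by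
      rw [Nat.cast_choose_two]
      push_cast
      ring
    have e1 : ((m + 1).choose 1 : ℝ) = (m:ℝ) + 1 := by
      rw [Nat.choose_one_right]; push_cast; ring
    simp only [hgdef]
    rw [e2, e1, pow_succ]
    ring
  have hT : ∑' m : ℕ, ((2 * ((m : ℝ) + 1) ^ 2 + 1) / 3) * r ^ (m + 1) =
      2 * r * (1 + r) / (3 * (1 - r) ^ 3) + r / (3 * (1 - r)) := by
    rw [hgsum.tsum_eq]
    field_simp
    ring
  have hg : Summable g := hgsum.summable
  -- summability of the a and b series
  have hsa : Summable (fun m : ℕ => ‖a (m + 1)‖ * r ^ (m + 1)) := by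
    apply Summable.of_nonneg_of_le (fun m => by positivity) (fun m => ?_) hg
    have := ha (m + 1) (by omega)
    have hb1 : ‖a (m + 1)‖ ≤ (2 * ((m : ℝ) + 1) ^ 2 + 1) / 3 := by
      push_cast at this ⊢; nlinarith [Nat.cast_nonneg (α := ℝ) m]
    exact mul_le_mul_of_nonneg_right hb1 (le_of_lt (hrpow _))
  have hsb : Summable (fun m : ℕ => ‖b (m + 2)‖ * r ^ (m + 2)) := by
    apply Summable.of_nonneg_of_le (fun m => by positivity) (fun m => ?_) hg
    have hbb := hb (m + 2) (by omega)
    have hb1 : ‖b (m + 2)‖ ≤ (2 * ((m : ℝ) + 1) ^ 2 + 1) / 3 := by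
      push_cast at hbb ⊢; nlinarith [Nat.cast_nonneg (α := ℝ) m]
    calc ‖b (m + 2)‖ * r ^ (m + 2) ≤ ((2 * ((m : ℝ) + 1) ^ 2 + 1) / 3) * r ^ (m + 2) :=
          mul_le_mul_of_nonneg_right hb1 (le_of_lt (hrpow _))
      _ ≤ g m := by
          apply mul_le_mul_of_nonneg_left _ (by positivity)
          rw [pow_succ]
          nlinarith [hrpow (m + 1)]
  have hsa' : Summable (fun m : ℕ => ‖a (m + 2)‖ * r ^ (m + 2)) := by
    have := (summable_nat_add_iff 1).mpr hsa
    simpa using this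
  have hg' : Summable (fun m : ℕ => g (m + 1)) := (summable_nat_add_iff 1).mpr hg
  -- Part 1
  have part1 : ∑' m : ℕ, ‖a (m + 1)‖ * r ^ (m + 1) + ∑' m : ℕ, ‖b (m + 2)‖ * r ^ (m + 2) ≤
      ∑' m : ℕ, ((2 * ((m : ℝ) + 1) ^ 2 + 1) / 3) * r ^ (m + 1) := by
    rw [Summable.tsum_eq_zero_add hsa, show (∑' m : ℕ, ((2 * ((m : ℝ) + 1) ^ 2 + 1) / 3) * r ^ (m + 1))
        = ∑' m, g m from rfl, Summable.tsum_eq_zero_add hg]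
    have ha1 : ‖a 1‖ * r ^ (0 + 1) ≤ g 0 := by
      have := ha 1 le_rfl
      have h1 : ‖a 1‖ ≤ 1 := by norm_num at this ⊢; linarith
      have : ‖a 1‖ * r ^ (0 + 1) ≤ 1 * r ^ (0 + 1) :=
        mul_le_mul_of_nonneg_right h1 (le_of_lt (hrpow _))
      simpa [hgdef] using this.trans (by norm_num)
    have htail : (∑' m : ℕ, ‖a (m + 1 + 1)‖ * r ^ (m + 1 + 1))
        + ∑' m : ℕ, ‖b (m + 2)‖ * r ^ (m + 2) ≤ ∑' m : ℕ, g (m + 1) := by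
      have hsa'' : Summable (fun m : ℕ => ‖a (m + 1 + 1)‖ * r ^ (m + 1 + 1)) := by
        simpa using hsa'
      rw [← Summable.tsum_add hsa'' hsb]
      apply Summable.tsum_le_tsum _ (hsa''.add hsb) hg'
      intro m
      have haa := ha (m + 2) (by omega)
      have hbb := hb (m + 2) (by omega)
      have hcoef : ‖a (m + 2)‖ + ‖b (m + 2)‖ ≤ (2 * ((m : ℝ) + 1 + 1) ^ 2 + 1) / 3 := by
        push_cast at haa hbb ⊢; linarith
      have : (‖a (m + 2)‖ + ‖b (m + 2)‖) * r ^ (m + 2)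
          ≤ ((2 * ((m : ℝ) + 1 + 1) ^ 2 + 1) / 3) * r ^ (m + 2) :=
        mul_le_mul_of_nonneg_right hcoef (le_of_lt (hrpow _))
      simp only [hgdef]
      push_cast
      calc ‖a (m + 1 + 1)‖ * r ^ (m + 1 + 1) + ‖b (m + 2)‖ * r ^ (m + 2)
          = (‖a (m + 2)‖ + ‖b (m + 2)‖) * r ^ (m + 2) := by ring_nf
        _ ≤ ((2 * ((m : ℝ) + 1 + 1) ^ 2 + 1) / 3) * r ^ (m + 2) := this
        _ = (2 * ((m : ℝ) + 1 + 1) ^ 2 + 1) / 3 * r ^ (m + 1 + 1) := by norm_num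
    linarith
  refine ⟨part1, hT, fun hpoly => ?_⟩
  have hle1 : 2 * r * (1 + r) / (3 * (1 - r) ^ 3) + r / (3 * (1 - r)) ≤ 1 := by
    have heq : 2 * r * (1 + r) / (3 * (1 - r) ^ 3) + r / (3 * (1 - r))
        = (3 * r + r ^ 3) / (3 * (1 - r) ^ 3) := by
      field_simp
      ring
    rw [heq, div_le_one (by positivity)]
    nlinarith
  calc _ ≤ ∑' m : ℕ, ((2 * ((m : ℝ) + 1) ^ 2 + 1) / 3) * r ^ (m + 1) := part1
    _ = _ := hT
    _ ≤ 1 := hle1
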